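/- Consider the composite function f = h ∘ c and for ε > 0 let z^ε(x) be the unique minimizer of z ↦ h(c(x) + ∇c(x)ᵀ(z − x)) + ‖z − x‖²/(2ε). For any compact set X ⊂ ℝⁿ and any ε̄ > 0, there exist positive constants δ and D such that sup_{ε∈(0,ε̄)} ‖z^ε(x) − x‖ ≤ D·dist(x, (∂f)⁻¹(0) ∩ X)^{1/2} for all x with dist(x, (∂f)⁻¹(0) ∩ X) ≤ δ. -/

import Mathlib

open Filter Topology Set
open scoped RealInnerProductSpace NNReal

noncomputable section

/-- The subdifferential (in the sense of convex analysis) of `h` at `u`. -/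
def convexSubdiff {m : ℕ} (h : EuclideanSpace ℝ (Fin m) → ℝ)
    (u : EuclideanSpace ℝ (Fin m)) : Set (EuclideanSpace ℝ (Fin m)) :=
  {v | ∀ z, h u + ⟪v, z - u⟫ ≤ h z}

/-- `∇c(x)`, the transpose (adjoint) of the Jacobian of `c` at `x`, acting `ℝᵐ → ℝⁿ`. -/
def nablaC {n m : ℕ}
    (c' : EuclideanSpace ℝ (Fin n) → (EuclideanSpace ℝ (Fin n) →L[ℝ] EuclideanSpace ℝ (Fin m)))
    (x : EuclideanSpace ℝ (Fin n)) :
    EuclideanSpace ℝ (Fin m) →L[ℝ] EuclideanSpace ℝ (Fin n) :=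
  ContinuousLinearMap.adjoint (c' x)

/-- The Clarke subdifferential of the composite `f = h ∘ c`:  `∂f(x) = ∇c(x) ∂h(c(x))`. -/
def compSubdiff {n m : ℕ} (c : EuclideanSpace ℝ (Fin n) → EuclideanSpace ℝ (Fin m))
    (c' : EuclideanSpace ℝ (Fin n) → (EuclideanSpace ℝ (Fin n) →L[ℝ] EuclideanSpace ℝ (Fin m)))
    (h : EuclideanSpace ℝ (Fin m) → ℝ) (x : EuclideanSpace ℝ (Fin n)) :
    Set (EuclideanSpace ℝ (Fin n)) :=
  (fun v => nablaC c' x v) '' convexSubdiff h (c x)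

/-- `y` belongs to the effective domain of the Fenchel conjugate `h*`. -/
def inDomStar {m : ℕ} (h : EuclideanSpace ℝ (Fin m) → ℝ)
    (y : EuclideanSpace ℝ (Fin m)) : Prop :=
  BddAbove (Set.range fun z => ⟪y, z⟫ - h z)

/-- The Fenchel conjugate `h*(y) = sup_z {⟨y, z⟩ − h(z)}` (real-valued on its domain). -/
def fenchelConj {m : ℕ} (h : EuclideanSpace ℝ (Fin m) → ℝ)
    (y : EuclideanSpace ℝ (Fin m)) : ℝ :=
  ⨆ z, (⟪y, z⟫ - h z)

/-- The dual regularized solution set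
`Y^ε(x) = argmax_y {yᵀc(x) − h*(y) − (ε/2)‖∇c(x) y‖²}`
(the maximization being over the effective domain of `h*`). -/
def regDual {n m : ℕ} (c : EuclideanSpace ℝ (Fin n) → EuclideanSpace ℝ (Fin m))
    (c' : EuclideanSpace ℝ (Fin n) → (EuclideanSpace ℝ (Fin n) →L[ℝ] EuclideanSpace ℝ (Fin m)))
    (h : EuclideanSpace ℝ (Fin m) → ℝ) (ε : ℝ) (x : EuclideanSpace ℝ (Fin n)) :
    Set (EuclideanSpace ℝ (Fin m)) :=
  {y | inDomStar h y ∧ ∀ y', inDomStar h y' →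
    ⟪y', c x⟫ - fenchelConj h y' - ε / 2 * ‖nablaC c' x y'‖ ^ 2 ≤
      ⟪y, c x⟫ - fenchelConj h y - ε / 2 * ‖nablaC c' x y‖ ^ 2}

/-- The subgradient-regularized map `G(x, ε) = {∇c(x) y : y ∈ Y^ε(x)}`. -/
def Gcomp {n m : ℕ} (c : EuclideanSpace ℝ (Fin n) → EuclideanSpace ℝ (Fin m))
    (c' : EuclideanSpace ℝ (Fin n) → (EuclideanSpace ℝ (Fin n) →L[ℝ] EuclideanSpace ℝ (Fin m)))
    (h : EuclideanSpace ℝ (Fin m) → ℝ) (x : EuclideanSpace ℝ (Fin n)) (ε : ℝ) :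
    Set (EuclideanSpace ℝ (Fin n)) :=
  (fun y => nablaC c' x y) '' regDual c c' h ε x

/-- The prox-linear objective `z ↦ h(c(x) + ∇c(x)ᵀ(z − x)) + ‖z − x‖²/(2ε)`. -/
def proxObj {n m : ℕ} (c : EuclideanSpace ℝ (Fin n) → EuclideanSpace ℝ (Fin m))
    (c' : EuclideanSpace ℝ (Fin n) → (EuclideanSpace ℝ (Fin n) →L[ℝ] EuclideanSpace ℝ (Fin m)))
    (h : EuclideanSpace ℝ (Fin m) → ℝ) (ε : ℝ) (x z : EuclideanSpace ℝ (Fin n)) : ℝ :=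
  h (c x + (c' x) (z - x)) + ‖z - x‖ ^ 2 / (2 * ε)


lemma quad_le_aux (u a b : ℝ) (ha : 0 ≤ a) (hb : 0 ≤ b) (hu : 0 ≤ u)
    (hq : u ^ 2 ≤ a + b * u) : u ≤ b + Real.sqrt a := by
  by_contra hcon
  push_neg at hcon
  have hs := Real.sq_sqrt ha
  have hs0 := Real.sqrt_nonneg a
  nlinarith [mul_nonneg hs0 hu]

set_option maxHeartbeats 1000000 in
/-- uniform Hölder stability near stationary points: with `z^ε(x)`
the unique minimizer of the prox-linear subproblem, for any compact `X` (with
`(∂f)⁻¹(0) ∩ X ≠ ∅`) and any `ε̄ > 0` there exist `δ, D > 0` such that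
`sup_{ε ∈ (0, ε̄)} ‖z^ε(x) − x‖ ≤ D · dist(x, (∂f)⁻¹(0) ∩ X)^{1/2}` for all `x`
with `dist(x, (∂f)⁻¹(0) ∩ X) ≤ δ`. -/
theorem composite_holder_stability {n m : ℕ}
    (c : EuclideanSpace ℝ (Fin n) → EuclideanSpace ℝ (Fin m))
    (c' : EuclideanSpace ℝ (Fin n) → (EuclideanSpace ℝ (Fin n) →L[ℝ] EuclideanSpace ℝ (Fin m)))
    (β : ℝ≥0) (hc : ∀ x, HasFDerivAt c (c' x) x) (hβ : LipschitzWith β c')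
    (h : EuclideanSpace ℝ (Fin m) → ℝ) (L : ℝ≥0)
    (hconv : ConvexOn ℝ Set.univ h) (hL : LipschitzWith L h)
    (hbdd : BddBelow (Set.range h))
    (z : ℝ → EuclideanSpace ℝ (Fin n) → EuclideanSpace ℝ (Fin n))
    (hz : ∀ ε > (0 : ℝ), ∀ x w : EuclideanSpace ℝ (Fin n),
      proxObj c c' h ε x (z ε x) ≤ proxObj c c' h ε x w)
    (X : Set (EuclideanSpace ℝ (Fin n))) (hX : IsCompact X)
    (hne : ({p | (0 : EuclideanSpace ℝ (Fin n)) ∈ compSubdiff c c' h p} ∩ X).Nonempty)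
    (εbar : ℝ) (hεbar : 0 < εbar) :
    ∃ δ > (0 : ℝ), ∃ D > (0 : ℝ), ∀ x : EuclideanSpace ℝ (Fin n),
      Metric.infDist x ({p | (0 : EuclideanSpace ℝ (Fin n)) ∈ compSubdiff c c' h p} ∩ X) ≤ δ →
      ∀ ε ∈ Set.Ioo (0 : ℝ) εbar,
        ‖z ε x - x‖ ≤ D * Real.sqrt
          (Metric.infDist x ({p | (0 : EuclideanSpace ℝ (Fin n)) ∈ compSubdiff c c' h p} ∩ X)) := by
  classical
  set S : Set (EuclideanSpace ℝ (Fin n)) :=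
    {p | (0 : EuclideanSpace ℝ (Fin n)) ∈ compSubdiff c c' h p} ∩ X with hSdef
  have hSne : S.Nonempty := hne
  obtain ⟨K, hK⟩ := hX.exists_bound_of_continuousOn hβ.continuous.continuousOn
  set K' : ℝ := max K 0 with hK'def
  have hK'0 : 0 ≤ K' := le_max_right _ _
  set M : ℝ := K' + 2 * (β : ℝ) with hMdef
  have hM0 : 0 ≤ M := by positivity
  have hL0 : (0:ℝ) ≤ (L:ℝ) := L.coe_nonneg
  set D : ℝ := 2 * Real.sqrt 2 * εbar * (L:ℝ) * (β:ℝ)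
      + 2 * Real.sqrt (εbar * (L:ℝ) * M) + 1 with hDdef
  have hD0 : 0 < D := by positivity
  refine ⟨1, one_pos, D, hD0, ?_⟩
  intro x hxd ε hε
  have hεpos : 0 < ε := hε.1
  set d := Metric.infDist x S with hddef
  have hd0 : 0 ≤ d := Metric.infDist_nonneg
  set s := z ε x - x with hsdef
  have hs0 : 0 ≤ ‖s‖ := norm_nonneg _
  have key : ∀ η ∈ Set.Ioc (0:ℝ) 1, ‖s‖ ≤ D * Real.sqrt (d + η) := by
    intro η hη
    have hlt : d < d + η := by linarith [hη.1]
    obtain ⟨xb, hxbS, hxbd⟩ := (Metric.infDist_lt_iff hSne).mp hlt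
    set r := ‖x - xb‖ with hrdef
    have hr0 : 0 ≤ r := norm_nonneg _
    have hrd : r < d + η := by rwa [hrdef, ← dist_eq_norm]
    have hr2 : r ≤ 2 := by linarith [hη.2, hxd]
    obtain ⟨v, hv, hv0⟩ := hxbS.1
    have hvL : ‖v‖ ≤ (L:ℝ) := by
      have h1 := hv (c xb + v)
      have h2 : h (c xb + v) ≤ h (c xb) + (L:ℝ) * ‖v‖ := by
        have h5 := hL.dist_le_mul (c xb + v) (c xb)
        rw [Real.dist_eq] at h5
        have h3 : dist (c xb + v) (c xb) = ‖v‖ := by simp [dist_eq_norm]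
        rw [h3] at h5
        linarith [(abs_le.mp h5).2]
      have h4 : ⟪v, c xb + v - c xb⟫ = ‖v‖^2 := by
        rw [add_sub_cancel_left]; exact real_inner_self_eq_norm_sq v
      rcases eq_or_lt_of_le (norm_nonneg v) with h5 | h5
      · rw [← h5]; exact hL0
      · nlinarith
    have hcM : ‖c x - c xb‖ ≤ M * ‖x - xb‖ := by
      refine Convex.norm_image_sub_le_of_norm_hasFDerivWithin_le
        (fun y _ => (hc y).hasFDerivWithinAt) (fun y hy => ?_)
        (convex_segment xb x) (left_mem_segment ℝ xb x) (right_mem_segment ℝ xb x)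
      obtain ⟨a, b, ha0, hb0, hab, rfl⟩ := hy
      have hyx : a • xb + b • x - xb = b • (x - xb) := by
        have ha : a = 1 - b := by linarith
        rw [ha]; module
      have h1 : ‖c' (a • xb + b • x) - c' xb‖ ≤ (β:ℝ) * 2 := by
        have h2 := hβ.dist_le_mul (a • xb + b • x) xb
        rw [dist_eq_norm, dist_eq_norm, hyx] at h2
        have h3 : ‖b • (x - xb)‖ ≤ r := by
          rw [norm_smul, Real.norm_eq_abs, abs_of_nonneg hb0]
          calc b * ‖x - xb‖ ≤ 1 * ‖x - xb‖ :=
                mul_le_mul_of_nonneg_right (by linarith) (norm_nonneg _)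
            _ = r := by rw [one_mul]
        calc ‖c' (a•xb+b•x) - c' xb‖ ≤ (β:ℝ) * ‖b • (x - xb)‖ := h2
          _ ≤ (β:ℝ) * 2 := by nlinarith [β.coe_nonneg]
      have h4 : ‖c' xb‖ ≤ K' := le_trans (hK xb hxbS.2) (le_max_left _ _)
      calc ‖c' (a • xb + b • x)‖ ≤ ‖c' xb‖ + ‖c' (a•xb+b•x) - c' xb‖ := by
            have h6 := norm_add_le (c' xb) (c' (a•xb+b•x) - c' xb)
            simpa using h6
        _ ≤ K' + (β:ℝ)*2 := add_le_add h4 h1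
        _ = M := by rw [hMdef]; ring
    have hprox : h (c x + (c' x) s) + ‖s‖^2 / (2*ε) ≤ h (c x) := by
      have h1 := hz ε hεpos x x
      simpa [proxObj, ← hsdef] using h1
    have hlip : h (c x) - h (c xb) ≤ (L:ℝ) * ‖c x - c xb‖ := by
      have h1 := hL.dist_le_mul (c x) (c xb)
      rw [Real.dist_eq, dist_eq_norm] at h1
      linarith [(abs_le.mp h1).2]
    have hsub := hv (c x + (c' x) s)
    have hinner : ⟪v, c x + (c' x) s - c xb⟫ = ⟪v, c x - c xb⟫ + ⟪v, (c' x) s⟫ := by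
      rw [show c x + (c' x) s - c xb = (c x - c xb) + (c' x) s by abel, inner_add_right]
    have hcs1 : -((L:ℝ) * ‖c x - c xb‖) ≤ ⟪v, c x - c xb⟫ := by
      have h1 := abs_real_inner_le_norm v (c x - c xb)
      nlinarith [norm_nonneg (c x - c xb), (abs_le.mp h1).1]
    have hv0' : nablaC c' xb v = 0 := hv0
    have hadj : ⟪v, (c' x) s⟫ = ⟪nablaC c' x v - nablaC c' xb v, s⟫ := by
      rw [hv0', sub_zero]
      show ⟪v, (c' x) s⟫ = ⟪ContinuousLinearMap.adjoint (c' x) v, s⟫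
      rw [ContinuousLinearMap.adjoint_inner_left]
    have hdiff : ‖nablaC c' x v - nablaC c' xb v‖ ≤ (β:ℝ) * r * (L:ℝ) := by
      have h1 : nablaC c' x v - nablaC c' xb v
          = (ContinuousLinearMap.adjoint (c' x - c' xb)) v := by
        have h0 : (ContinuousLinearMap.adjoint (c' x - c' xb) :
              EuclideanSpace ℝ (Fin m) →L[ℝ] EuclideanSpace ℝ (Fin n))
            = ContinuousLinearMap.adjoint (c' x) - ContinuousLinearMap.adjoint (c' xb) :=
          map_sub _ _ _
        rw [h0, ContinuousLinearMap.sub_apply]; rfl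
      rw [h1]
      calc ‖(ContinuousLinearMap.adjoint (c' x - c' xb)) v‖
          ≤ ‖ContinuousLinearMap.adjoint (c' x - c' xb)‖ * ‖v‖ :=
            ContinuousLinearMap.le_opNorm _ _
        _ ≤ ((β:ℝ) * r) * (L:ℝ) := by
            have h2 : ‖ContinuousLinearMap.adjoint (c' x - c' xb)‖ = ‖c' x - c' xb‖ :=
              LinearIsometryEquiv.norm_map _ _
            have h3 : ‖c' x - c' xb‖ ≤ (β:ℝ) * r := by
              have h5 := hβ.dist_le_mul x xb
              rwa [dist_eq_norm, dist_eq_norm] at h5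
            rw [h2]
            exact mul_le_mul h3 hvL (norm_nonneg v) (by positivity)
    have hcs2 : -((β:ℝ) * r * (L:ℝ) * ‖s‖) ≤ ⟪nablaC c' x v - nablaC c' xb v, s⟫ := by
      have h1 := abs_real_inner_le_norm (nablaC c' x v - nablaC c' xb v) s
      nlinarith [(abs_le.mp h1).1, norm_nonneg (nablaC c' x v - nablaC c' xb v)]
    have hmain : ‖s‖^2 / (2*ε) ≤ 2*(L:ℝ)*(M*r) + (β:ℝ)*r*(L:ℝ)*‖s‖ := by
      have hLM : (L:ℝ) * ‖c x - c xb‖ ≤ (L:ℝ) * (M*r) := by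
        rw [hrdef]
        exact mul_le_mul_of_nonneg_left hcM hL0
      rw [hinner, hadj] at hsub
      have t0 : h (c x + (c' x) s) ≤ h (c x) - ‖s‖^2/(2*ε) := by linarith [hprox]
      have t1 := le_trans hsub t0
      have t2 : ‖s‖^2/(2*ε) ≤ h (c x) - h (c xb) - inner ℝ v (c x - c xb)
          - inner ℝ ((nablaC c' x) v - (nablaC c' xb) v) s := by linarith [t1]
      have chk1 : -((L:ℝ) * ‖c x - c xb‖) ≤ inner ℝ v (c x - c xb) := by linarith [hcs1]
      have chk2 : h (c x) - h (c xb) ≤ (L:ℝ) * ‖c x - c xb‖ := by linarith [hlip]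
      have chk3 : -((β:ℝ)*r*(L:ℝ)*‖s‖) ≤ inner ℝ ((nablaC c' x) v - (nablaC c' xb) v) s := by
        linarith [hcs2]
      have chk4 : (L:ℝ) * ‖c x - c xb‖ ≤ (L:ℝ) * (M*r) := by linarith [hLM]
      have t3 : ‖s‖^2/(2*ε) ≤ (L:ℝ) * ‖c x - c xb‖ + (L:ℝ) * ‖c x - c xb‖
          + (β:ℝ)*r*(L:ℝ)*‖s‖ := by linarith [t2, chk1, chk2, chk3]
      calc ‖s‖^2/(2*ε) ≤ (L:ℝ) * ‖c x - c xb‖ + (L:ℝ) * ‖c x - c xb‖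
            + (β:ℝ)*r*(L:ℝ)*‖s‖ := t3
        _ ≤ (L:ℝ)*(M*r) + (L:ℝ)*(M*r) + (β:ℝ)*r*(L:ℝ)*‖s‖ :=
            add_le_add (add_le_add chk4 chk4) le_rfl
        _ = 2*(L:ℝ)*(M*r) + (β:ℝ)*r*(L:ℝ)*‖s‖ := by ring
    have hq : ‖s‖^2 ≤ (4*ε*(L:ℝ)*M*r) + (2*ε*(β:ℝ)*(L:ℝ)*r) * ‖s‖ := by
      have h2ε : 0 < 2*ε := by linarith
      have h1 := (div_le_iff₀ h2ε).mp hmain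
      calc ‖s‖^2 ≤ (2*(L:ℝ)*(M*r) + (β:ℝ)*r*(L:ℝ)*‖s‖)*(2*ε) := h1
        _ = (4*ε*(L:ℝ)*M*r) + (2*ε*(β:ℝ)*(L:ℝ)*r)*‖s‖ := by ring
    have hub := quad_le_aux ‖s‖ (4*ε*(L:ℝ)*M*r) (2*ε*(β:ℝ)*(L:ℝ)*r)
      (by positivity) (by positivity) hs0 hq
    have hsqrt_r : Real.sqrt r ≤ Real.sqrt (d + η) := Real.sqrt_le_sqrt hrd.le
    have hrle : r ≤ Real.sqrt 2 * Real.sqrt r := by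
      have h1 : Real.sqrt r ≤ Real.sqrt 2 := Real.sqrt_le_sqrt hr2
      nlinarith [Real.sq_sqrt hr0, Real.sqrt_nonneg r]
    have hεb : ε ≤ εbar := hε.2.le
    have hb1 : 2*ε*(β:ℝ)*(L:ℝ)*r ≤ 2*Real.sqrt 2*εbar*(L:ℝ)*(β:ℝ) * Real.sqrt r := by
      calc 2*ε*(β:ℝ)*(L:ℝ)*r ≤ 2*ε*(β:ℝ)*(L:ℝ)*(Real.sqrt 2 * Real.sqrt r) :=
            mul_le_mul_of_nonneg_left hrle (by positivity)
        _ ≤ 2*εbar*(β:ℝ)*(L:ℝ)*(Real.sqrt 2 * Real.sqrt r) := by gcongr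
        _ = 2*Real.sqrt 2*εbar*(L:ℝ)*(β:ℝ) * Real.sqrt r := by ring
    have ha1 : Real.sqrt (4*ε*(L:ℝ)*M*r) ≤ 2*Real.sqrt (εbar*(L:ℝ)*M) * Real.sqrt r := by
      have h1 : 4*ε*(L:ℝ)*M*r ≤ 2^2*((εbar*(L:ℝ)*M)*r) := by
        nlinarith [mul_nonneg (mul_nonneg (mul_nonneg (sub_nonneg.mpr hεb) hL0) hM0) hr0]
      calc Real.sqrt (4*ε*(L:ℝ)*M*r) ≤ Real.sqrt (2^2*((εbar*(L:ℝ)*M)*r)) :=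
            Real.sqrt_le_sqrt h1
        _ = 2 * Real.sqrt ((εbar*(L:ℝ)*M)*r) := by
            rw [Real.sqrt_mul (by positivity), Real.sqrt_sq (by norm_num)]
        _ = 2 * (Real.sqrt (εbar*(L:ℝ)*M) * Real.sqrt r) := by
            rw [Real.sqrt_mul (by positivity)]
        _ = 2*Real.sqrt (εbar*(L:ℝ)*M) * Real.sqrt r := by ring
    calc ‖s‖ ≤ 2*ε*(β:ℝ)*(L:ℝ)*r + Real.sqrt (4*ε*(L:ℝ)*M*r) := hub
      _ ≤ 2*Real.sqrt 2*εbar*(L:ℝ)*(β:ℝ)*Real.sqrt r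
            + 2*Real.sqrt (εbar*(L:ℝ)*M)*Real.sqrt r := add_le_add hb1 ha1
      _ = (2*Real.sqrt 2*εbar*(L:ℝ)*(β:ℝ) + 2*Real.sqrt (εbar*(L:ℝ)*M)) * Real.sqrt r := by
            ring
      _ ≤ D * Real.sqrt r := by
            apply mul_le_mul_of_nonneg_right _ (Real.sqrt_nonneg r)
            rw [hDdef]; linarith
      _ ≤ D * Real.sqrt (d + η) := mul_le_mul_of_nonneg_left hsqrt_r hD0.le
  have hlim : Tendsto (fun η : ℝ => D * Real.sqrt (d + η)) (𝓝[>] 0) (𝓝 (D * Real.sqrt d)) := by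
    have h1 : Tendsto (fun η : ℝ => d + η) (𝓝 (0:ℝ)) (𝓝 (d + 0)) :=
      tendsto_const_nhds.add tendsto_id
    rw [add_zero] at h1
    have h2 : Tendsto (fun η : ℝ => D * Real.sqrt (d + η)) (𝓝 (0:ℝ)) (𝓝 (D * Real.sqrt d)) :=
      tendsto_const_nhds.mul ((Real.continuous_sqrt.tendsto d).comp h1)
    exact h2.mono_left nhdsWithin_le_nhds
  refine ge_of_tendsto hlim ?_
  filter_upwards [Ioc_mem_nhdsGT (one_pos : (0:ℝ) < 1)] with η hη
  exact key η hη
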